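/- For the map ψ(X) = X ⊕ X² ⊕ ⋯ ⊕ Xⁿ from m×m real matrices to m×(mn) real matrices (columnwise direct sum), the image ψ(M_{m,m}(ℝ)) is not contained in any affine hyperplane of M_{m,mn}(ℝ); i.e., the affine span of the image is all of M_{m,mn}(ℝ). -/

import Mathlib

/-- The column index of the `ℓ`-th block (`0`-indexed), column `t`, in an `m × (m*n)` matrix
built as a columnwise direct sum of `n` blocks of size `m × m`. -/
def colIdx (m n : ℕ) (ℓ : Fin n) (t : Fin m) : Fin (m * n) :=
  ⟨(ℓ : ℕ) * m + (t : ℕ), by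
    calc (ℓ : ℕ) * m + (t : ℕ) < (ℓ : ℕ) * m + m := Nat.add_lt_add_left t.isLt _
    _ = ((ℓ : ℕ) + 1) * m := (Nat.succ_mul _ _).symm
    _ ≤ n * m := Nat.mul_le_mul_right m ℓ.isLt
    _ = m * n := Nat.mul_comm n m⟩

/-- The columnwise direct sum `X ⊕ X² ⊕ ⋯ ⊕ Xⁿ`. -/
noncomputable def veroneseMatrix (m n : ℕ) (hm : 0 < m) (X : Matrix (Fin m) (Fin m) ℝ) :
    Matrix (Fin m) (Fin (m * n)) ℝ :=
  Matrix.of fun i j => (X ^ ((j : ℕ) / m + 1)) i ⟨(j : ℕ) % m, Nat.mod_lt _ hm⟩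

/-- Embedding of an `m × m` block into the `k`-th block of an `m × (m*n)` matrix. -/
noncomputable def embedBlockL (m n : ℕ) (hm : 0 < m) (k : ℕ) :
    Matrix (Fin m) (Fin m) ℝ →ₗ[ℝ] Matrix (Fin m) (Fin (m * n)) ℝ where
  toFun B := Matrix.of fun i j =>
    if (j : ℕ) / m = k then B i ⟨(j : ℕ) % m, Nat.mod_lt _ hm⟩ else 0
  map_add' A B := by
    ext i j
    simp only [Matrix.of_apply, Matrix.add_apply]
    split_ifs <;> simp
  map_smul' t B := by
    ext i j
    simp only [Matrix.of_apply, Matrix.smul_apply, RingHom.id_apply]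
    split_ifs <;> simp

lemma verSum (m n : ℕ) (hm : 0 < m) (hn : 0 < n) (X : Matrix (Fin m) (Fin m) ℝ) :
    veroneseMatrix m n hm X = ∑ k : Fin n, embedBlockL m n hm k (X ^ ((k : ℕ) + 1)) := by
  ext i j
  have hdiv : (j : ℕ) / m < n := by
    rw [Nat.div_lt_iff_lt_mul hm]
    calc (j : ℕ) < m * n := j.isLt
    _ = n * m := Nat.mul_comm m n
  rw [Matrix.sum_apply]
  rw [Finset.sum_eq_single (⟨(j : ℕ) / m, hdiv⟩ : Fin n)]
  · simp [veroneseMatrix, embedBlockL]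
  · intro b _ hb
    simp only [embedBlockL, LinearMap.coe_mk, AddHom.coe_mk, Matrix.of_apply]
    rw [if_neg]
    intro hcon
    exact hb (Fin.ext hcon.symm)
  · intro hcon
    exact absurd (Finset.mem_univ _) hcon

lemma embed_std (m n : ℕ) (hm : 0 < m) (i : Fin m) (j : Fin (m * n)) :
    embedBlockL m n hm ((j : ℕ) / m)
      (Matrix.single i ⟨(j : ℕ) % m, Nat.mod_lt _ hm⟩ 1) =
    Matrix.single i j 1 := by
  ext i' j'
  have e1 := Nat.div_add_mod (j : ℕ) m
  have e2 := Nat.div_add_mod (j' : ℕ) m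
  by_cases hjj : j = j'
  · subst hjj
    simp [embedBlockL, Matrix.single]
  · have hr : Matrix.single i j (1 : ℝ) i' j' = 0 := by
      simp [Matrix.single, hjj]
    rw [hr]
    simp only [embedBlockL, LinearMap.coe_mk, AddHom.coe_mk, Matrix.of_apply]
    by_cases hd : (j' : ℕ) / m = (j : ℕ) / m
    · rw [if_pos hd]
      have hmj : ¬ ((⟨(j : ℕ) % m, Nat.mod_lt _ hm⟩ : Fin m) =
          (⟨(j' : ℕ) % m, Nat.mod_lt _ hm⟩ : Fin m)) := by
        intro hc
        have hcval : (j : ℕ) % m = (j' : ℕ) % m := congrArg Fin.val hc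
        apply hjj
        apply Fin.ext
        rw [← e1, ← e2, hd, hcval]
      simp [Matrix.single, hmj]
    · rw [if_neg hd]

/-- The image of `X ↦ X ⊕ X² ⊕ ⋯ ⊕ Xⁿ` is not contained in any affine hyperplane of
`M_{m,mn}(ℝ)`. -/
theorem stmt6 (m n : ℕ) (hm : 0 < m) (hn : 0 < n) :
    ¬ ∃ (l : Matrix (Fin m) (Fin (m * n)) ℝ →ₗ[ℝ] ℝ) (c : ℝ),
      l ≠ 0 ∧ ∀ X : Matrix (Fin m) (Fin m) ℝ, l (veroneseMatrix m n hm X) = c := by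
  rintro ⟨l, c, hl, h⟩
  apply hl
  -- c = 0
  have hver0 : veroneseMatrix m n hm 0 = 0 := by
    ext i j
    simp [veroneseMatrix, zero_pow (Nat.succ_ne_zero _)]
  have hc : c = 0 := by
    have := h 0
    rw [hver0, map_zero] at this
    exact this.symm
  -- the key vanishing
  have key : ∀ (k : Fin n) (A : Matrix (Fin m) (Fin m) ℝ),
      l (embedBlockL m n hm k (A ^ ((k : ℕ) + 1))) = 0 := by
    intro k A
    set a : Fin n → ℝ := fun k' => l (embedBlockL m n hm k' (A ^ ((k' : ℕ) + 1))) with ha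
    set p : Polynomial ℝ := ∑ k' : Fin n, Polynomial.C (a k') * Polynomial.X ^ ((k' : ℕ) + 1)
      with hp
    have heval : ∀ t : ℝ, p.eval t = 0 := by
      intro t
      have ht := h (t • A)
      rw [hc, verSum m n hm hn] at ht
      rw [map_sum] at ht
      have : ∀ k' : Fin n,
          l (embedBlockL m n hm k' ((t • A) ^ ((k' : ℕ) + 1))) = a k' * t ^ ((k' : ℕ) + 1) := by
        intro k'
        rw [smul_pow, map_smul, map_smul, smul_eq_mul, ha, mul_comm]
      rw [Finset.sum_congr rfl (fun k' _ => this k')] at ht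
      rw [hp]
      rw [Polynomial.eval_finset_sum]
      simpa using ht
    have hp0 : p = 0 := Polynomial.zero_of_eval_zero p heval
    have hcoeff : p.coeff ((k : ℕ) + 1) = a k := by
      rw [hp, Polynomial.finset_sum_coeff]
      rw [Finset.sum_eq_single k]
      · simp
      · intro b _ hb
        rw [Polynomial.coeff_C_mul, Polynomial.coeff_X_pow, if_neg, mul_zero]
        intro hcon
        exact hb (Fin.ext (by omega))
      · intro hcon
        exact absurd (Finset.mem_univ _) hcon
    rw [hp0] at hcoeff
    simpa using hcoeff.symm
  -- vanishing on embedded standard basis matrices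
  have basis0 : ∀ (k : Fin n) (p q : Fin m),
      l (embedBlockL m n hm k (Matrix.single p q 1)) = 0 := by
    intro k p q
    have idem_pp : IsIdempotentElem (Matrix.single p p (1 : ℝ)) := by
      unfold IsIdempotentElem
      rw [Matrix.single_mul_single_same, mul_one]
    by_cases hpq : p = q
    · subst hpq
      have := key k (Matrix.single p p 1)
      rwa [idem_pp.pow_succ_eq] at this
    · have idem_sum : IsIdempotentElem
          (Matrix.single p p (1 : ℝ) + Matrix.single p q 1) := by
        have f1 : Matrix.single p q (1 : ℝ) * Matrix.single p p 1 = 0 :=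
          Matrix.single_mul_single_of_ne (c := (1:ℝ)) p q p (Ne.symm hpq) 1
        have f2 : Matrix.single p q (1 : ℝ) * Matrix.single p q 1 = 0 :=
          Matrix.single_mul_single_of_ne (c := (1:ℝ)) p q p (Ne.symm hpq) 1
        unfold IsIdempotentElem
        rw [add_mul, mul_add, mul_add, Matrix.single_mul_single_same,
          Matrix.single_mul_single_same, f1, f2]
        simp
      have h1 := key k (Matrix.single p p 1 + Matrix.single p q 1)
      rw [idem_sum.pow_succ_eq, map_add, map_add] at h1
      have h2 := key k (Matrix.single p p 1)
      rw [idem_pp.pow_succ_eq] at h2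
      linarith
  -- conclude l = 0
  ext M
  rw [Matrix.matrix_eq_sum_single M, map_sum]
  rw [Finset.sum_eq_zero]
  · simp
  intro i _
  rw [map_sum, Finset.sum_eq_zero]
  intro j _
  have hdiv : (j : ℕ) / m < n := by
    rw [Nat.div_lt_iff_lt_mul hm]
    calc (j : ℕ) < m * n := j.isLt
    _ = n * m := Nat.mul_comm m n
  have hstd : Matrix.single i j (M i j) = (M i j) • Matrix.single i j 1 := by
    rw [Matrix.smul_single, smul_eq_mul, mul_one]
  rw [hstd, map_smul, smul_eq_mul, ← embed_std m n hm i j]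
  rw [basis0 ⟨(j : ℕ) / m, hdiv⟩ i ⟨(j : ℕ) % m, Nat.mod_lt _ hm⟩, mul_zero]
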